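/- The full Gatheral–Schied closed-form value function Γ*(τ, X, S) = κ X² coth(τκ) + (λ X S / κ) tanh(τκ/2) − (λ² S² e^{σ²τ} / (4κ²)) ∫₀^τ tanh(uκ/2)² e^{−σ²u} du satisfies the risk-averse reduced HJB equation ∂Γ/∂τ = (1/2)σ²S² ∂²Γ/∂S² + κ²X² + λSX − (1/4)(∂Γ/∂X)² for all τ > 0, X ∈ ℝ, S ∈ ℝ. -/

import Mathlib

/-- The full Gatheral–Schied closed-form value function
`Γ*(τ, X, S) = κ X² coth(τκ) + (λ X S / κ) tanh(τκ/2)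
  − (λ² S² e^{σ²τ} / (4κ²)) ∫₀^τ tanh(uκ/2)² e^{−σ²u} du`. -/
noncomputable def GammaStar (σ κ lam : ℝ) (τ X S : ℝ) : ℝ :=
  κ * X ^ 2 * (Real.cosh (τ * κ) / Real.sinh (τ * κ))
    + (lam * X * S / κ) * Real.tanh (τ * κ / 2)
    - (lam ^ 2 * S ^ 2 * Real.exp (σ ^ 2 * τ) / (4 * κ ^ 2))
        * ∫ u in (0:ℝ)..τ, Real.tanh (u * κ / 2) ^ 2 * Real.exp (-(σ ^ 2) * u)

lemma my_hasDerivAt_tanh (x : ℝ) : HasDerivAt Real.tanh (1 - Real.tanh x ^ 2) x := by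
  have h := (Real.hasDerivAt_sinh x).div (Real.hasDerivAt_cosh x) (Real.cosh_pos x).ne'
  have heq : (Real.sinh / Real.cosh) = Real.tanh := by
    funext y; rw [Pi.div_apply, Real.tanh_eq_sinh_div_cosh]
  rw [heq] at h
  refine h.congr_deriv ?_
  have hc := Real.cosh_sq_sub_sinh_sq x
  have hcn : Real.cosh x ≠ 0 := (Real.cosh_pos x).ne'
  rw [Real.tanh_eq_sinh_div_cosh]
  field_simp

lemma my_continuous_tanh : Continuous Real.tanh :=
  continuous_iff_continuousAt.mpr fun x => (my_hasDerivAt_tanh x).continuousAt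

lemma my_hasDerivAt_coth {x : ℝ} (hx : Real.sinh x ≠ 0) :
    HasDerivAt (fun y => Real.cosh y / Real.sinh y)
      (1 - (Real.cosh x / Real.sinh x) ^ 2) x := by
  have h := (Real.hasDerivAt_cosh x).div (Real.hasDerivAt_sinh x) hx
  refine h.congr_deriv ?_
  have hc := Real.cosh_sq_sub_sinh_sq x
  field_simp

lemma coth_mul_tanh_half {t : ℝ} (ht : Real.sinh t ≠ 0) :
    (Real.cosh t / Real.sinh t) * Real.tanh (t / 2)
      = (1 + Real.tanh (t / 2) ^ 2) / 2 := by
  have hc2 : Real.cosh t = 2 * Real.cosh (t / 2) ^ 2 - 1 := by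
    have h := Real.cosh_two_mul (t / 2)
    have hid := Real.cosh_sq_sub_sinh_sq (t / 2)
    rw [show 2 * (t / 2) = t by ring] at h
    linarith
  have hs2 : Real.sinh t = 2 * Real.sinh (t / 2) * Real.cosh (t / 2) := by
    have h := Real.sinh_two_mul (t / 2)
    rw [show 2 * (t / 2) = t by ring] at h
    linarith
  have hch : Real.cosh (t / 2) ≠ 0 := (Real.cosh_pos _).ne'
  have hid := Real.cosh_sq_sub_sinh_sq (t / 2)
  rw [Real.tanh_eq_sinh_div_cosh, hc2, hs2]
  rw [hs2] at ht
  have hsh : Real.sinh (t / 2) ≠ 0 := by intro h0; apply ht; rw [h0]; ring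
  field_simp
  linear_combination hid

/-- `Γ*` satisfies the risk-averse reduced HJB equation
`∂Γ/∂τ = (1/2)σ²S² ∂²Γ/∂S² + κ²X² + λSX − (1/4)(∂Γ/∂X)²`
for all `τ > 0`, `X ∈ ℝ`, `S ∈ ℝ`. -/
theorem gammaStar_solves_HJB (σ κ lam : ℝ) (hσ : 0 < σ) (hκ : 0 < κ) (hlam : 0 ≤ lam)
    (τ X S : ℝ) (hτ : 0 < τ) :
    deriv (fun s : ℝ => GammaStar σ κ lam s X S) τ
      = (1 / 2) * σ ^ 2 * S ^ 2
          * deriv (fun s : ℝ => deriv (fun s' : ℝ => GammaStar σ κ lam τ X s') s) S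
        + κ ^ 2 * X ^ 2 + lam * S * X
        - (1 / 4) * (deriv (fun x : ℝ => GammaStar σ κ lam τ x S) X) ^ 2 := by
  have hκ0 : κ ≠ 0 := hκ.ne'
  have hsinh : Real.sinh (τ * κ) ≠ 0 := (Real.sinh_pos_iff.mpr (mul_pos hτ hκ)).ne'
  set C : ℝ := Real.cosh (τ * κ) / Real.sinh (τ * κ) with hC
  set T : ℝ := Real.tanh (τ * κ / 2) with hT
  set E : ℝ := Real.exp (σ ^ 2 * τ) with hE
  set f : ℝ → ℝ := fun u => Real.tanh (u * κ / 2) ^ 2 * Real.exp (-(σ ^ 2) * u) with hf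
  set I : ℝ := ∫ u in (0:ℝ)..τ, f u with hI
  have hfc : Continuous f := by
    apply Continuous.mul
    · exact (my_continuous_tanh.comp (by continuity)).pow 2
    · exact Real.continuous_exp.comp (by continuity)
  -- S derivative (second order)
  have hSfun : ∀ y : ℝ, (fun s' : ℝ => GammaStar σ κ lam τ X s')
      = fun s' : ℝ => κ * X ^ 2 * C + (lam * X / κ * T) * s'
        + (-(lam ^ 2 * E * I / (4 * κ ^ 2))) * s' ^ 2 := by
    intro y; funext s'; simp only [GammaStar, hC, hT, hE, hI, hf]; ring
  have hS1 : ∀ y : ℝ, HasDerivAt (fun s' : ℝ => GammaStar σ κ lam τ X s')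
      (lam * X / κ * T + 2 * (-(lam ^ 2 * E * I / (4 * κ ^ 2))) * y) y := by
    intro y
    rw [hSfun y]
    have h1 := ((hasDerivAt_id' (x := y)).const_mul (lam * X / κ * T))
    have h2 := (hasDerivAt_pow 2 y).const_mul (-(lam ^ 2 * E * I / (4 * κ ^ 2)))
    have := ((hasDerivAt_const y (κ * X ^ 2 * C)).add h1).add h2
    refine this.congr_deriv ?_
    ring
  have hS2 : deriv (fun s : ℝ => deriv (fun s' : ℝ => GammaStar σ κ lam τ X s') s) S
      = -(lam ^ 2 * E * I / (2 * κ ^ 2)) := by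
    have heq : (fun s : ℝ => deriv (fun s' : ℝ => GammaStar σ κ lam τ X s') s)
        = fun s : ℝ => lam * X / κ * T + 2 * (-(lam ^ 2 * E * I / (4 * κ ^ 2))) * s := by
      funext s; exact (hS1 s).deriv
    rw [heq]
    have := ((hasDerivAt_id' (x := S)).const_mul
      (2 * (-(lam ^ 2 * E * I / (4 * κ ^ 2))))).const_add (lam * X / κ * T)
    rw [this.deriv]
    ring
  -- X derivative
  have hXfun : (fun x : ℝ => GammaStar σ κ lam τ x S)
      = fun x : ℝ => (κ * C) * x ^ 2 + (lam * S / κ * T) * x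
        + (-(lam ^ 2 * S ^ 2 * E / (4 * κ ^ 2) * I)) := by
    funext x; simp only [GammaStar, hC, hT, hE, hI, hf]; ring
  have hX : deriv (fun x : ℝ => GammaStar σ κ lam τ x S) X
      = 2 * κ * C * X + lam * S / κ * T := by
    rw [hXfun]
    have h1 := (hasDerivAt_pow 2 X).const_mul (κ * C)
    have h2 := (hasDerivAt_id' (x := X)).const_mul (lam * S / κ * T)
    have h := (h1.add h2).add_const (-(lam ^ 2 * S ^ 2 * E / (4 * κ ^ 2) * I))
    erw [h.deriv]
    ring
  -- τ derivative
  have hτfun : (fun s : ℝ => GammaStar σ κ lam s X S)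
      = fun s : ℝ => κ * X ^ 2 * (Real.cosh (s * κ) / Real.sinh (s * κ))
        + (lam * X * S / κ) * Real.tanh (s * κ / 2)
        - (lam ^ 2 * S ^ 2 / (4 * κ ^ 2))
            * (Real.exp (σ ^ 2 * s) * ∫ u in (0:ℝ)..s, f u) := by
    funext s; simp only [GammaStar, hf]; ring
  have hcoth : HasDerivAt (fun s : ℝ => Real.cosh (s * κ) / Real.sinh (s * κ))
      ((1 - C ^ 2) * κ) τ := by
    have hin : HasDerivAt (fun s : ℝ => s * κ) κ τ := by
      simpa using (hasDerivAt_id' (x := τ)).mul_const κ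
    exact (my_hasDerivAt_coth hsinh).comp τ hin
  have htanh : HasDerivAt (fun s : ℝ => Real.tanh (s * κ / 2))
      ((1 - T ^ 2) * (κ / 2)) τ := by
    have hin : HasDerivAt (fun s : ℝ => s * κ / 2) (κ / 2) τ := by
      have := (hasDerivAt_id' (x := τ)).mul_const κ
      simpa [mul_div_assoc] using this.div_const 2
    exact (my_hasDerivAt_tanh (τ * κ / 2)).comp τ hin
  have hexp : HasDerivAt (fun s : ℝ => Real.exp (σ ^ 2 * s)) (σ ^ 2 * E) τ := by
    have hin : HasDerivAt (fun s : ℝ => σ ^ 2 * s) (σ ^ 2) τ := by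
      simpa using (hasDerivAt_id' (x := τ)).const_mul (σ ^ 2)
    have h2 := hin.exp
    rwa [show Real.exp (σ ^ 2 * τ) * σ ^ 2 = σ ^ 2 * E by rw [hE]; ring] at h2
  have hint : HasDerivAt (fun s : ℝ => ∫ u in (0:ℝ)..s, f u) (f τ) τ :=
    (hfc.integral_hasStrictDerivAt 0 τ).hasDerivAt
  have hfτ : E * f τ = T ^ 2 := by
    simp only [hf, hE, hT]
    rw [show E * (Real.tanh (τ * κ / 2) ^ 2 * Real.exp (-(σ ^ 2) * τ))
        = Real.tanh (τ * κ / 2) ^ 2 * (Real.exp (σ ^ 2 * τ) * Real.exp (-(σ ^ 2) * τ)) by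
      rw [hE]; ring]
    rw [← Real.exp_add]
    norm_num
  have hτd : deriv (fun s : ℝ => GammaStar σ κ lam s X S) τ
      = κ * X ^ 2 * ((1 - C ^ 2) * κ) + (lam * X * S / κ) * ((1 - T ^ 2) * (κ / 2))
        - (lam ^ 2 * S ^ 2 / (4 * κ ^ 2)) * (σ ^ 2 * E * I + T ^ 2) := by
    rw [hτfun]
    have hprod : HasDerivAt (fun s : ℝ =>
        Real.exp (σ ^ 2 * s) * ∫ u in (0:ℝ)..s, f u)
        (σ ^ 2 * E * I + E * f τ) τ := by
      have := hexp.mul hint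
      exact this.congr_deriv rfl
    have h := ((hcoth.const_mul (κ * X ^ 2)).add
        (htanh.const_mul (lam * X * S / κ))).sub
        (hprod.const_mul (lam ^ 2 * S ^ 2 / (4 * κ ^ 2)))
    erw [h.deriv, hfτ]
    try ring
  -- assemble
  rw [hτd, hS2, hX]
  have hCT : C * T = (1 + T ^ 2) / 2 := coth_mul_tanh_half hsinh
  field_simp
  linear_combination (16 * κ ^ 2 * lam * X * S) * hCT
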